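/- Let F be a finite field, T ≥ 1, s ∈ F, and α_1, ..., α_T distinct nonzero points in F. If the coefficients r_1, ..., r_T are chosen independently and uniformly at random in F and p(x) = s + r_1 x + ... + r_T x^T, then the joint distribution of (p(α_1), ..., p(α_T)) is uniform on F^T, and in particular is independent of the secret s. -/

import Mathlib

lemma map_uniform_of_bijective {β : Type*} [Fintype β] [Nonempty β] {f : β → β}
    (hf : Function.Bijective f) :
    PMF.map f (PMF.uniformOfFintype β) = PMF.uniformOfFintype β := by
  classical
  ext x
  obtain ⟨y0, hy0⟩ := hf.surjective x
  rw [PMF.map_apply, PMF.uniformOfFintype_apply]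
  have : ∀ y : β, (if x = f y then (PMF.uniformOfFintype β) y else 0)
      = if y = y0 then ((Fintype.card β : ENNReal))⁻¹ else 0 := by
    intro y
    have hxy : x = f y ↔ y = y0 := by
      constructor
      · intro h; exact hf.injective (hy0.trans h).symm
      · rintro rfl; exact hy0.symm
    simp only [PMF.uniformOfFintype_apply, hxy]
  simp only [this, tsum_ite_eq]

theorem stmt10 (F : Type*) [Field F] [Fintype F] [DecidableEq F] (T : ℕ) (hT : 1 ≤ T)
    (s : F) (α : Fin T → F) (hinj : Function.Injective α) (hz : ∀ i, α i ≠ 0) :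
    PMF.map (fun r : Fin T → F => fun i : Fin T => s + ∑ j : Fin T, r j * α i ^ ((j : ℕ) + 1))
        (PMF.uniformOfFintype (Fin T → F)) =
      PMF.uniformOfFintype (Fin T → F) := by
  classical
  set M : Matrix (Fin T) (Fin T) F := fun i j => α i ^ ((j : ℕ) + 1) with hM
  have hdet : IsUnit M.det := by
    have : M = Matrix.of (fun (i j : Fin T) => α i * α i ^ (j : ℕ)) := by
      ext i j; simp [hM, pow_succ, mul_comm]
    rw [this]
    rw [Matrix.det_mul_column α (fun (i j : Fin T) => α i ^ (j : ℕ))]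
    rw [show (fun (i j : Fin T) => α i ^ (j : ℕ)) = Matrix.vandermonde α from rfl,
      Matrix.det_vandermonde]
    apply IsUnit.mul
    · exact (Finset.prod_ne_zero_iff.2 fun i _ => hz i).isUnit
    · refine (Finset.prod_ne_zero_iff.2 fun i _ => Finset.prod_ne_zero_iff.2 fun j hj => ?_).isUnit
      rw [Finset.mem_Ioi] at hj
      exact sub_ne_zero.2 fun h => absurd (hinj h) (ne_of_gt hj)
  have hmv : Function.Injective M.mulVec := Matrix.mulVec_injective_iff_isUnit.2 ((Matrix.isUnit_iff_isUnit_det M).2 hdet)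
  have hbij : Function.Bijective
      (fun r : Fin T → F => fun i : Fin T => s + ∑ j : Fin T, r j * α i ^ ((j : ℕ) + 1)) := by
    refine Finite.injective_iff_bijective.1 ?_
    intro r r' h
    apply hmv
    funext i
    have := congrFun h i
    simp only [add_right_inj] at this
    simpa [Matrix.mulVec, dotProduct, hM, mul_comm] using this
  exact map_uniform_of_bijective hbij
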